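/- Let p be a prime and R a p-nilpotent commutative ring. Then the ring 𝕎 R is p-adically complete: 𝕎 R, viewed as a module over itself, is adically complete (Hausdorff and complete) with respect to the ideal generated by p. -/

import Mathlib

open WittVector

section Aux

variable {p : ℕ} [hp : Fact p.Prime] {R : Type*} [CommRing R]

local notation "𝕎" => WittVector p

lemma aux_iterate_verschiebung_coeff_lt (x : 𝕎 R) {n i : ℕ} (hi : i < n) :
    (verschiebung^[n] x).coeff i = 0 := by
  induction n generalizing i x with
  | zero => omega
  | succ n ih =>
    rw [Function.iterate_succ_apply']
    cases i with
    | zero => exact verschiebung_coeff_zero _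
    | succ i =>
      rw [verschiebung_coeff_succ]
      exact ih _ (by omega)

lemma aux_nsmul_iterate (k n : ℕ) (a : 𝕎 R) :
    k • (verschiebung^[n] a) = verschiebung^[n] (k • a) := by
  induction n generalizing a with
  | zero => rfl
  | succ n ih =>
    rw [Function.iterate_succ_apply, Function.iterate_succ_apply, ih,
      map_nsmul verschiebung k a]

/-- If the first `n` coefficients of `x` vanish, then the first `n` coefficients of `k • x`
vanish and its `n`-th coefficient is `k • x.coeff n`. -/
lemma aux_nsmul_lo (k : ℕ) (x : 𝕎 R) {n : ℕ} (h : ∀ i < n, x.coeff i = 0) :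
    (∀ i < n, (k • x).coeff i = 0) ∧ (k • x).coeff n = k • x.coeff n := by
  have hx := WittVector.eq_iterate_verschiebung h
  constructor
  · intro i hi
    rw [hx, aux_nsmul_iterate]
    exact aux_iterate_verschiebung_coeff_lt _ hi
  · have h0 : ∀ z : 𝕎 R, (verschiebung^[n] z).coeff n = z.coeff 0 := by
      intro z
      have := WittVector.iterate_verschiebung_coeff z n 0
      simpa using this
    rw [hx, aux_nsmul_iterate, h0, h0]
    exact map_nsmul (WittVector.constantCoeff (p := p)) k _

lemma aux_pN_smul {N : ℕ} (hN : (p : R) ^ N = 0) (x : 𝕎 R) {n : ℕ}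
    (h : ∀ i < n, x.coeff i = 0) : ∀ i < n + 1, ((p ^ N) • x).coeff i = 0 := by
  obtain ⟨h1, h2⟩ := aux_nsmul_lo (p ^ N) x h
  intro i hi
  rcases lt_or_eq_of_le (Nat.lt_succ_iff.mp hi) with hi' | rfl
  · exact h1 i hi'
  · rw [h2, nsmul_eq_mul]
    push_cast
    rw [hN, zero_mul]

lemma aux_pow_smul {N : ℕ} (hN : (p : R) ^ N = 0) (n : ℕ) (x : 𝕎 R) :
    ∀ i < n, ((p ^ (N * n)) • x).coeff i = 0 := by
  induction n with
  | zero => omega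
  | succ n ih =>
    have : p ^ (N * (n + 1)) • x = p ^ N • (p ^ (N * n) • x) := by
      rw [smul_smul, ← pow_add]
      ring_nf
    rw [this]
    exact aux_pN_smul hN _ (ih)

lemma aux_dvd_coeff {N : ℕ} (hN : (p : R) ^ N = 0) {n : ℕ} {x : 𝕎 R}
    (h : (p : 𝕎 R) ^ (N * n) ∣ x) : ∀ i < n, x.coeff i = 0 := by
  obtain ⟨y, rfl⟩ := h
  have : (p : 𝕎 R) ^ (N * n) * y = (p ^ (N * n)) • y := by
    rw [nsmul_eq_mul]; push_cast; ring
  rw [this]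
  exact aux_pow_smul hN n y

lemma aux_coeff_eq_of_trunc {K : ℕ} {x y : 𝕎 R}
    (h : WittVector.truncate K x = WittVector.truncate K y) {i : ℕ} (hi : i < K) :
    x.coeff i = y.coeff i := by
  have := congrArg (TruncatedWittVector.coeff ⟨i, hi⟩) h
  simpa [WittVector.coeff_truncate] using this

lemma aux_trunc_eq_of_dvd {N : ℕ} (hN : (p : R) ^ N = 0) {K : ℕ} {x y : 𝕎 R}
    (h : (p : 𝕎 R) ^ (N * K) ∣ x - y) :
    WittVector.truncate K x = WittVector.truncate K y := by
  have hker : x - y ∈ RingHom.ker (WittVector.truncate (p := p) K) :=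
    (WittVector.mem_ker_truncate (n := K) (x - y)).mpr (aux_dvd_coeff hN h)
  rw [RingHom.mem_ker, map_sub, sub_eq_zero] at hker
  exact hker

lemma aux_eq_of_forall_trunc {x y : 𝕎 R}
    (h : ∀ K, WittVector.truncate K x = WittVector.truncate K y) : x = y := by
  ext k
  exact aux_coeff_eq_of_trunc (h (k + 1)) (Nat.lt_succ_self k)

end Aux

/-- If `R` is `p`-nilpotent, then `𝕎 R` is `p`-adically complete. -/
theorem wittVector_isAdicComplete (p : ℕ) [Fact p.Prime] (R : Type*) [CommRing R]
    (hR : ∃ N : ℕ, (p : R) ^ N = 0) :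
    IsAdicComplete (Ideal.span {(p : WittVector p R)}) (WittVector p R) := by
  obtain ⟨N, hN⟩ := hR
  refine { toIsHausdorff := ⟨?_⟩, toIsPrecomplete := ⟨?_⟩ }
  · -- Hausdorff
    intro x hx
    ext k
    have h := hx (N * (k + 1))
    rw [SModEq.zero, smul_eq_mul, Ideal.mul_top, Ideal.span_singleton_pow,
      Ideal.mem_span_singleton] at h
    simpa using aux_dvd_coeff hN h k (Nat.lt_succ_self k)
  · -- Precomplete
    intro f hf
    -- extract the increments
    have hg : ∀ k : ℕ, ∃ g : WittVector p R, f k - f (k + 1) = (p : WittVector p R) ^ k * g := by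
      intro k
      have := hf (Nat.le_succ k)
      rw [SModEq.sub_mem, smul_eq_mul, Ideal.mul_top, Ideal.span_singleton_pow,
        Ideal.mem_span_singleton] at this
      exact this
    choose g hgspec using hg
    -- partial sums of the tail series starting at `m`
    set ps : ℕ → ℕ → WittVector p R :=
      fun m M => ∑ j ∈ Finset.range M, (p : WittVector p R) ^ j * g (j + m) with hps
    have tele : ∀ m M, f (m + M) = f m - (p : WittVector p R) ^ m * ps m M := by
      intro m M
      induction M with
      | zero => simp [hps]
      | succ M ih =>
        have h1 : f (m + (M + 1)) = f (m + M) - (p : WittVector p R) ^ (m + M) * g (m + M) := by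
          have := hgspec (m + M)
          rw [show m + (M + 1) = (m + M) + 1 by ring]
          linear_combination -this
        rw [h1, ih, hps]
        simp only [Finset.sum_range_succ]
        rw [show M + m = m + M by ring]
        ring
    -- stability of coefficients of partial sums
    have stable : ∀ m K M M', N * K ≤ M → M ≤ M' →
        WittVector.truncate K (ps m M') = WittVector.truncate K (ps m M) := by
      intro m K M M' hM hMM'
      apply aux_trunc_eq_of_dvd hN
      have hsub : ps m M' - ps m M =
          ∑ j ∈ Finset.Ico M M', (p : WittVector p R) ^ j * g (j + m) := by
        rw [hps]
        rw [Finset.sum_Ico_eq_sub _ hMM']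
      rw [hsub]
      apply Finset.dvd_sum
      intro j hj
      rw [Finset.mem_Ico] at hj
      exact Dvd.dvd.mul_right (pow_dvd_pow _ (le_trans hM hj.1)) _
    -- the limit of each tail series
    set S : ℕ → WittVector p R :=
      fun m => WittVector.mk p (fun k => (ps m (N * (k + 1))).coeff k) with hS
    have truncS : ∀ m K M, N * K ≤ M →
        WittVector.truncate K (S m) = WittVector.truncate K (ps m M) := by
      intro m K M hM
      apply TruncatedWittVector.ext
      intro ⟨i, hi⟩
      rw [WittVector.coeff_truncate, WittVector.coeff_truncate]
      have h1 : (S m).coeff i = (ps m (N * (i + 1))).coeff i := rfl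
      rw [h1]
      have hle : N * (i + 1) ≤ N * K := Nat.mul_le_mul_left N hi
      rcases le_total (N * (i + 1)) M with hcase | hcase
      · exact (aux_coeff_eq_of_trunc (stable m (i + 1) (N * (i + 1)) M le_rfl hcase)
          (Nat.lt_succ_self i)).symm
      · exact aux_coeff_eq_of_trunc (stable m (i + 1) M (N * (i + 1))
          (le_trans (Nat.mul_le_mul_left N (by omega)) hM) hcase) (Nat.lt_succ_self i)
    -- splitting of partial sums
    have split : ∀ m M, ps 0 (m + M) = ps 0 m + (p : WittVector p R) ^ m * ps m M := by
      intro m M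
      simp only [hps, Finset.range_eq_Ico]
      rw [← Finset.sum_Ico_consecutive _ (Nat.zero_le m) (Nat.le_add_right m M)]
      congr 1
      rw [Finset.sum_Ico_eq_sum_range]
      simp only [Nat.add_sub_cancel_left, ← Finset.range_eq_Ico]
      rw [Finset.mul_sum]
      apply Finset.sum_congr rfl
      intro j _
      rw [pow_add]
      ring_nf
    -- key identity : S 0 = ps 0 m + p^m * S m
    have key : ∀ m, S 0 = ps 0 m + (p : WittVector p R) ^ m * S m := by
      intro m
      apply aux_eq_of_forall_trunc
      intro K
      rw [truncS 0 K (m + N * K) (by omega), split m (N * K), map_add, map_add, map_mul, map_mul,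
        truncS m K (N * K) le_rfl]
    refine ⟨f 0 - S 0, ?_⟩
    intro n
    rw [SModEq.sub_mem, smul_eq_mul, Ideal.mul_top, Ideal.span_singleton_pow,
      Ideal.mem_span_singleton]
    have hfn : f n = f 0 - ps 0 n := by
      have := tele 0 n
      simpa using this
    rw [hfn, key n]
    exact ⟨S n, by ring⟩
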